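/- Let F_X = {X ⪰ 0 : A(X) = b} be invariant under a group G of permutation matrices, and let r = max{rank(X) : X ∈ F_X}. Then r = max{rank(R_G(X)) : X ∈ F_X} = max{rank(X) : X ∈ F_X ∩ A_G}, where R_G is the Reynolds operator and A_G the commutant. -/

import Mathlib

open Matrix

/-- `P` is a permutation matrix. -/
def IsPermMatrix {n : ℕ} (P : Matrix (Fin n) (Fin n) ℝ) : Prop :=
  ∃ σ : Equiv.Perm (Fin n), ∀ i j, P i j = if i = σ j then 1 else 0

lemma rank_le_of_mulVec_imp {n : ℕ} {A B : Matrix (Fin n) (Fin n) ℝ}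
    (h : ∀ v, B *ᵥ v = 0 → A *ᵥ v = 0) : A.rank ≤ B.rank := by
  have hker : LinearMap.ker B.mulVecLin ≤ LinearMap.ker A.mulVecLin := by
    intro v hv
    simp only [LinearMap.mem_ker, mulVecLin_apply] at hv ⊢
    exact h v hv
  have h1 := LinearMap.finrank_range_add_finrank_ker A.mulVecLin
  have h2 := LinearMap.finrank_range_add_finrank_ker B.mulVecLin
  have h3 : Module.finrank ℝ (LinearMap.ker B.mulVecLin) ≤
      Module.finrank ℝ (LinearMap.ker A.mulVecLin) := Submodule.finrank_mono hker
  rw [Matrix.rank, Matrix.rank]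
  omega

lemma perm_transpose_mul {n : ℕ} {P : Matrix (Fin n) (Fin n) ℝ}
    (h : IsPermMatrix P) : Pᵀ * P = 1 := by
  obtain ⟨σ, hσ⟩ := h
  ext i j
  simp only [Matrix.mul_apply, Matrix.transpose_apply, Matrix.one_apply, hσ]
  rw [Finset.sum_eq_single (σ i)]
  · by_cases hij : i = j <;> simp [hij, Equiv.apply_eq_iff_eq, eq_comm]
  · intro k _ hk
    simp [hk]
  · simp

lemma sum_mulVec' {n : ℕ} {ι : Type*} (s : Finset ι)
    (A : ι → Matrix (Fin n) (Fin n) ℝ) (v : Fin n → ℝ) :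
    (∑ i ∈ s, A i) *ᵥ v = ∑ i ∈ s, A i *ᵥ v := by
  ext j
  simp only [Matrix.mulVec, dotProduct, Matrix.sum_apply, Finset.sum_apply, Finset.sum_mul]
  rw [Finset.sum_comm]

lemma dotProduct_sum' {n : ℕ} {ι : Type*} (s : Finset ι)
    (v : Fin n → ℝ) (w : ι → (Fin n → ℝ)) :
    v ⬝ᵥ (∑ i ∈ s, w i) = ∑ i ∈ s, v ⬝ᵥ w i := by
  simp only [dotProduct, Matrix.sum_apply, Finset.sum_apply, Finset.mul_sum]
  rw [Finset.sum_comm]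

/-- Let `F = {X ⪰ 0 : 𝒜(X) = b}` be invariant under a group `G` of permutation matrices,
and let `r = max{rank X : X ∈ F}`. Then `r = max{rank (R_G X) : X ∈ F}`
`= max{rank X : X ∈ F ∩ A_G}`, where `R_G` is the Reynolds operator and `A_G` the
commutant. -/
theorem rank_max_reynolds_commutant {n m : ℕ}
    (𝒜 : Matrix (Fin n) (Fin n) ℝ →ₗ[ℝ] (Fin m → ℝ)) (b : Fin m → ℝ)
    (G : Finset (Matrix (Fin n) (Fin n) ℝ))
    (hone : (1 : Matrix (Fin n) (Fin n) ℝ) ∈ G)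
    (hperm : ∀ P ∈ G, IsPermMatrix P)
    (hmul : ∀ P ∈ G, ∀ Q ∈ G, P * Q ∈ G)
    (hinv : ∀ P ∈ G, Pᵀ ∈ G)
    (F : Set (Matrix (Fin n) (Fin n) ℝ))
    (hF : F = {X | X.PosSemidef ∧ 𝒜 X = b})
    (hinvar : ∀ X ∈ F, ∀ P ∈ G, P * X * Pᵀ ∈ F)
    (r : ℕ) (hub : ∀ X ∈ F, X.rank ≤ r) (hach : ∃ X ∈ F, X.rank = r) :
    let RG : Matrix (Fin n) (Fin n) ℝ → Matrix (Fin n) (Fin n) ℝ :=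
      fun X => (G.card : ℝ)⁻¹ • ∑ P ∈ G, Pᵀ * X * P
    let AG : Set (Matrix (Fin n) (Fin n) ℝ) := {M | ∀ P ∈ G, P * M = M * P}
    (∀ X ∈ F, (RG X).rank ≤ r) ∧ (∃ X ∈ F, (RG X).rank = r) ∧
      (∀ X ∈ F ∩ AG, X.rank ≤ r) ∧ (∃ X ∈ F ∩ AG, X.rank = r) := by
  intro RG AG
  have hcard : (0 : ℝ) < (G.card : ℝ) := by
    exact_mod_cast Finset.card_pos.mpr ⟨1, hone⟩
  have hcne : (G.card : ℝ) ≠ 0 := ne_of_gt hcard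
  have hterm : ∀ X ∈ F, ∀ P ∈ G, Pᵀ * X * P ∈ F := by
    intro X hX P hP
    have := hinvar X hX Pᵀ (hinv P hP)
    simpa [Matrix.transpose_transpose] using this
  have hpsd : ∀ X ∈ F, X.PosSemidef := by
    intro X hX; rw [hF] at hX; exact hX.1
  have hAeq : ∀ X ∈ F, 𝒜 X = b := by
    intro X hX; rw [hF] at hX; exact hX.2
  -- RG X ∈ F for X ∈ F
  have hRGF : ∀ X ∈ F, RG X ∈ F := by
    intro X hX
    rw [hF]
    refine ⟨Matrix.PosSemidef.of_dotProduct_mulVec_nonneg ?_ ?_, ?_⟩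
    · -- Hermitian
      show ((G.card : ℝ)⁻¹ • ∑ P ∈ G, Pᵀ * X * P)ᴴ = _
      rw [Matrix.conjTranspose_smul, Matrix.conjTranspose_sum]
      simp only [star_inv₀, star_natCast]
      congr 1
      refine Finset.sum_congr rfl fun P hP => ?_
      exact (hpsd _ (hterm X hX P hP)).1
    · -- nonneg quadratic form
      intro x
      show (0 : ℝ) ≤ star x ⬝ᵥ ((G.card : ℝ)⁻¹ • ∑ P ∈ G, Pᵀ * X * P) *ᵥ x
      rw [Matrix.smul_mulVec, dotProduct_smul, sum_mulVec', dotProduct_sum']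
      refine mul_nonneg (by positivity) (Finset.sum_nonneg fun P hP => ?_)
      exact (hpsd _ (hterm X hX P hP)).dotProduct_mulVec_nonneg x
    · -- affine constraint
      show 𝒜 ((G.card : ℝ)⁻¹ • ∑ P ∈ G, Pᵀ * X * P) = b
      rw [_root_.map_smul, map_sum]
      rw [Finset.sum_congr rfl (fun P hP => hAeq _ (hterm X hX P hP))]
      rw [Finset.sum_const, ← Nat.cast_smul_eq_nsmul ℝ, smul_smul,
        inv_mul_cancel₀ hcne, one_smul]
  -- rank X ≤ rank (RG X) for X ∈ F
  have hranklb : ∀ X ∈ F, X.rank ≤ (RG X).rank := by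
    intro X hX
    apply rank_le_of_mulVec_imp
    intro v hv
    have hv' : ((G.card : ℝ)⁻¹ • ∑ P ∈ G, Pᵀ * X * P) *ᵥ v = 0 := hv
    have hsumv : (∑ P ∈ G, Pᵀ * X * P) *ᵥ v = 0 := by
      rw [Matrix.smul_mulVec] at hv'
      have h2 := congrArg (fun w => (G.card : ℝ) • w) hv'
      simpa [smul_smul, mul_inv_cancel₀ hcne] using h2
    have hdot : ∑ P ∈ G, v ⬝ᵥ (Pᵀ * X * P) *ᵥ v = 0 := by
      rw [← dotProduct_sum', ← sum_mulVec', hsumv, dotProduct_zero]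
    have hnonneg : ∀ P ∈ G, 0 ≤ v ⬝ᵥ (Pᵀ * X * P) *ᵥ v := by
      intro P hP
      have hp := hpsd _ (hterm X hX P hP)
      simpa using hp.dotProduct_mulVec_nonneg v
    have hzero : ∀ P ∈ G, v ⬝ᵥ (Pᵀ * X * P) *ᵥ v = 0 :=
      (Finset.sum_eq_zero_iff_of_nonneg hnonneg).mp hdot
    have hXdot : v ⬝ᵥ X *ᵥ v = 0 := by
      have := hzero 1 hone
      simpa using this
    exact ((hpsd X hX).dotProduct_mulVec_zero_iff v).mp (by simpa using hXdot)
  -- RG X commutes with every Q ∈ G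
  have hRGcomm : ∀ X, ∀ Q ∈ G, Q * RG X = RG X * Q := by
    intro X Q hQ
    have hQt : Qᵀ * Q = 1 := perm_transpose_mul (hperm Q hQ)
    have hQt' : Q * Qᵀ = 1 := by
      have := perm_transpose_mul (hperm Qᵀ (hinv Q hQ))
      simpa [Matrix.transpose_transpose] using this
    have key : Q * (∑ P ∈ G, Pᵀ * X * P) * Qᵀ = ∑ P ∈ G, Pᵀ * X * P := by
      rw [Finset.mul_sum, Finset.sum_mul]
      apply Finset.sum_nbij' (fun P => P * Qᵀ) (fun P => P * Q)
      · intro P hP; exact hmul P hP Qᵀ (hinv Q hQ)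
      · intro P hP; exact hmul P hP Q hQ
      · intro P hP
        rw [Matrix.mul_assoc, hQt, Matrix.mul_one]
      · intro P hP
        rw [Matrix.mul_assoc, hQt', Matrix.mul_one]
      · intro P hP
        rw [Matrix.transpose_mul, Matrix.transpose_transpose]
        noncomm_ring
    show Q * ((G.card : ℝ)⁻¹ • ∑ P ∈ G, Pᵀ * X * P) =
      ((G.card : ℝ)⁻¹ • ∑ P ∈ G, Pᵀ * X * P) * Q
    rw [Matrix.mul_smul, Matrix.smul_mul]
    congr 1
    calc Q * ∑ P ∈ G, Pᵀ * X * P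
        = (Q * (∑ P ∈ G, Pᵀ * X * P) * Qᵀ) * Q := by
          rw [Matrix.mul_assoc (Q * _), hQt, Matrix.mul_one]
      _ = (∑ P ∈ G, Pᵀ * X * P) * Q := by rw [key]
  obtain ⟨X₀, hX₀F, hX₀r⟩ := hach
  have hRG₀F : RG X₀ ∈ F := hRGF X₀ hX₀F
  have hRG₀r : (RG X₀).rank = r :=
    le_antisymm (hub _ hRG₀F) (hX₀r ▸ hranklb X₀ hX₀F)
  exact ⟨fun X hX => hub _ (hRGF X hX), ⟨X₀, hX₀F, hRG₀r⟩,
    fun X hX => hub _ hX.1, ⟨RG X₀, ⟨hRG₀F, fun Q hQ => hRGcomm X₀ Q hQ⟩, hRG₀r⟩⟩
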